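/- Fix α ∈ Λ and assume the Fock form is positive semidefinite on each F_k. Then the sesquilinear form on the free complex vector space with basis {e_β : β ∈ Λ, β ∼ α} determined by ⟨e_β, e_γ⟩ = q(γ,β) is a well-defined Hermitian positive-semidefinite form; moreover, whenever σ^m(β) = σ^m(γ) one has ⟨e_β, e_γ⟩ = ⟨e_{(β_1,…,β_m)}, e_{(γ_1,…,γ_m)}⟩_F, and ⟨e_β, e_γ⟩ = 0 if no such m exists. -/

import Mathlib

open scoped BigOperators InnerProductSpace

namespace QCstar

variable {d : ℕ}

/-- `q(j,α)`: product of `q j a` over the prefix of `α` preceding the first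
occurrence of `j` (the whole list if `j` does not occur in `α`). -/
def qOne (q : Fin d → Fin d → ℂ) (j : Fin d) (α : List (Fin d)) : ℂ :=
  ((α.takeWhile fun a => a ≠ j).map (q j)).prod

/-- `q(α,β)` for finite multiindices, defined by recursion on `α`. -/
def qMul (q : Fin d → Fin d → ℂ) : List (Fin d) → List (Fin d) → ℂ
  | [], _ => 1
  | a :: α, β => qOne q a β * qMul q α (β.erase a)

/-- `s_α = s_{α₁} ⋯ s_{α_m}`. -/
def sWord {A : Type*} [Monoid A] (s : Fin d → A) (α : List (Fin d)) : A :=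
  (α.map s).prod

/-- The shift on infinite multiindices. -/
def shift (β : ℕ → Fin d) : ℕ → Fin d := fun n => β (n + 1)

/-- The finite multiindex `(β₁,…,β_m)`. -/
def prefixList (β : ℕ → Fin d) (m : ℕ) : List (Fin d) :=
  List.ofFn fun i : Fin m => β i

/-- `β ∼ α`: the tails agree up to a shift. -/
def equivTail (β α : ℕ → Fin d) : Prop := ∃ m n, shift^[m] β = shift^[n] α

/-- `q(α,β)` for infinite multiindices: the limit of `q` of the prefixes. -/
noncomputable def qInf (q : Fin d → Fin d → ℂ) (α β : ℕ → Fin d) : ℂ :=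
  Filter.limUnder Filter.atTop fun m => qMul q (prefixList α m) (prefixList β m)

/-- `(j, β₁, β₂, …)`. -/
def consSeq (j : Fin d) (β : ℕ → Fin d) : ℕ → Fin d
  | 0 => j
  | n + 1 => β n

open Classical in
/-- `β ∖ j` for an infinite multiindex: remove the first occurrence of `j`. -/
noncomputable def eraseInf (j : Fin d) (β : ℕ → Fin d) : ℕ → Fin d :=
  if h : ∃ n, β n = j then fun k => if k < Nat.find h then β k else β (k + 1) else β

open Classical in
/-- `q(j,β)` for an infinite multiindex containing `j`. -/
noncomputable def qOneInf (q : Fin d → Fin d → ℂ) (j : Fin d) (β : ℕ → Fin d) : ℂ :=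
  if h : ∃ n, β n = j then ∏ k ∈ Finset.range (Nat.find h), q j (β k) else 0

/-- Entries of the Fock form. -/
noncomputable def fockEntry (q : Fin d → Fin d → ℂ) (α β : List (Fin d)) : ℂ :=
  if β.Perm α then qMul q β α else 0

/-- The Fock sesquilinear form on the free complex vector space with basis the
finite multiindices (conjugate-linear in the first argument). -/
noncomputable def fockForm (q : Fin d → Fin d → ℂ) (x y : List (Fin d) →₀ ℂ) : ℂ :=
  ∑ α ∈ x.support, ∑ β ∈ y.support, (starRingEnd ℂ) (x α) * y β * fockEntry q α β

/-- The sesquilinear form on the free complex vector space with basis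
`{e_β : β ∼ α}`, determined by `⟨e_β, e_γ⟩ = q(γ,β)` (conjugate-linear in the
first argument). -/
noncomputable def tailForm (q : Fin d → Fin d → ℂ) (α : ℕ → Fin d)
    (x y : {β : ℕ → Fin d // equivTail β α} →₀ ℂ) : ℂ :=
  ∑ β ∈ x.support, ∑ γ ∈ y.support, (starRingEnd ℂ) (x β) * y γ * qInf q γ.1 β.1

variable (q : Fin d → Fin d → ℂ)

lemma qMul_nil (B : List (Fin d)) : qMul q [] B = 1 := rfl

lemma qMul_cons (c : Fin d) (X B : List (Fin d)) :
    qMul q (c :: X) B = qOne q c B * qMul q X (B.erase c) := rfl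

lemma qOne_nil (j : Fin d) : qOne q j [] = 1 := rfl

lemma qOne_cons_self (j : Fin d) (t : List (Fin d)) : qOne q j (j :: t) = 1 := by
  unfold qOne
  rw [List.takeWhile_cons_of_neg] <;> simp

lemma qOne_cons_ne {j a : Fin d} (h : a ≠ j) (t : List (Fin d)) :
    qOne q j (a :: t) = q j a * qOne q j t := by
  unfold qOne
  rw [List.takeWhile_cons_of_pos] <;> simp [h]

lemma qMul_self (A : List (Fin d)) : qMul q A A = 1 := by
  induction A with
  | nil => rfl
  | cons a t ih => rw [qMul_cons, qOne_cons_self, List.erase_cons_head, ih, one_mul]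

lemma qOne_append_left {c : Fin d} {b : List (Fin d)} (h : c ∈ b) (t : List (Fin d)) :
    qOne q c (b ++ t) = qOne q c b := by
  induction b with
  | nil => simp at h
  | cons a b' ih =>
    by_cases hac : a = c
    · subst hac; rw [List.cons_append, qOne_cons_self, qOne_cons_self]
    · have : c ∈ b' := by simpa [Ne.symm hac] using h
      rw [List.cons_append, qOne_cons_ne q hac, qOne_cons_ne q hac, ih this]

lemma qMul_append_perm {g b : List (Fin d)} (h : g.Perm b) (t : List (Fin d)) :
    qMul q (g ++ t) (b ++ t) = qMul q g b := by
  induction g generalizing b with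
  | nil =>
    have : b = [] := h.symm.eq_nil
    subst this; simpa [qMul_nil] using qMul_self q t
  | cons c g' ih =>
    have hc : c ∈ b ∧ g'.Perm (b.erase c) := List.cons_perm_iff_perm_erase.mp h
    rw [List.cons_append, qMul_cons, qMul_cons, qOne_append_left q hc.1,
      List.erase_append_left _ hc.1, ih hc.2]


/-- number of "passed" factors accumulated by `qMul`. -/
def passCount : List (Fin d) → List (Fin d) → ℕ
  | [], _ => 0
  | c :: X, B => (B.takeWhile fun a => a ≠ c).length + passCount X (B.erase c)

lemma abs_list_prod_le {r : ℝ} (hr : 0 ≤ r) (l : List ℂ)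
    (h : ∀ z ∈ l, ‖z‖ ≤ r) : ‖l.prod‖ ≤ r ^ l.length := by
  induction l with
  | nil => simp
  | cons z l ih =>
    rw [List.prod_cons, norm_mul, List.length_cons, pow_succ, mul_comm (r ^ l.length) r]
    exact mul_le_mul (h z (by simp)) (ih fun w hw => h w (by simp [hw]))
      (norm_nonneg _) hr

lemma abs_qOne_le {r : ℝ} (hr : 0 ≤ r) (hq : ∀ i j : Fin d, i ≠ j → ‖q i j‖ ≤ r)
    (c : Fin d) (B : List (Fin d)) :
    ‖qOne q c B‖ ≤ r ^ (B.takeWhile fun a => a ≠ c).length := by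
  unfold qOne
  have := abs_list_prod_le hr ((B.takeWhile fun a => a ≠ c).map (q c)) ?_
  · simpa using this
  · intro z hz
    obtain ⟨a, ha, rfl⟩ := List.mem_map.mp hz
    have : a ≠ c := by simpa using List.mem_takeWhile_imp ha
    exact hq c a (Ne.symm this)

lemma abs_qMul_le {r : ℝ} (hr : 0 ≤ r) (hq : ∀ i j : Fin d, i ≠ j → ‖q i j‖ ≤ r)
    (X : List (Fin d)) : ∀ B, ‖qMul q X B‖ ≤ r ^ passCount X B := by
  induction X with
  | nil => intro B; simp [qMul_nil, passCount]
  | cons c X ih =>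
    intro B
    rw [qMul_cons, norm_mul, passCount, pow_add]
    exact mul_le_mul (abs_qOne_le q hr hq c B) (ih _) (norm_nonneg _)
      (pow_nonneg hr _)

/-- number of prefix lengths at which the two lists fail to be permutations. -/
def badCount (X B : List (Fin d)) : ℕ :=
  ((Finset.Icc 1 X.length).filter fun ℓ => ¬ (X.take ℓ).Perm (B.take ℓ)).card

lemma exists_dropWhile_cons {c : Fin d} {B : List (Fin d)} (h : c ∈ B) :
    ∃ w, B.dropWhile (fun a => a ≠ c) = c :: w := by
  induction B with
  | nil => simp at h
  | cons a B' ih =>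
    by_cases hac : a = c
    · subst hac
      exact ⟨B', by rw [List.dropWhile_cons_of_neg (by simp)]⟩
    · rw [List.dropWhile_cons_of_pos (by simp [hac])]
      exact ih (by simpa [Ne.symm hac] using h)


lemma badCount_le (X : List (Fin d)) :
    ∀ B : List (Fin d), X.length = B.length → badCount X B ≤ 2 * passCount X B + 1 := by
  induction X with
  | nil => intro B h; simp [badCount]
  | cons c X' ih =>
    intro B hlen
    by_cases hc : c ∈ B
    · obtain ⟨w, hw⟩ := exists_dropWhile_cons hc
      set u := B.takeWhile (fun a => a ≠ c) with hu
      have hB : B = u ++ c :: w := by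
        rw [hu, ← hw, List.takeWhile_append_dropWhile]
      have hcu : c ∉ u := by
        intro hmem
        have := List.mem_takeWhile_imp hmem
        simp at this
      have herase : B.erase c = u ++ w := by
        rw [hB, List.erase_append_right _ hcu, List.erase_cons_head]
      have hlen' : X'.length = (B.erase c).length := by
        rw [List.length_erase_of_mem hc, ← hlen]; simp
      have hkey : ∀ ℓ, u.length + 1 ≤ ℓ →
          (((c :: X').take ℓ).Perm (B.take ℓ) ↔
            ((X'.take (ℓ-1)).Perm ((B.erase c).take (ℓ-1)))) := by
        intro ℓ hℓ
        obtain ⟨ℓ', rfl⟩ : ∃ ℓ', ℓ = ℓ' + 1 := ⟨ℓ - 1, by omega⟩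
        have hpℓ : u.length ≤ ℓ' := by omega
        simp only [Nat.add_sub_cancel]
        have htB : B.take (ℓ' + 1) = u ++ c :: w.take (ℓ' - u.length) := by
          conv_lhs => rw [hB]
          rw [List.take_append,
            List.take_of_length_le (show u.length ≤ ℓ' + 1 by omega)]
          have e : ℓ' + 1 - u.length = (ℓ' - u.length) + 1 := by omega
          rw [e, List.take_succ_cons]
        have htB' : (B.erase c).take ℓ' = u ++ w.take (ℓ' - u.length) := by
          rw [herase, List.take_append,
            List.take_of_length_le (show u.length ≤ ℓ' by omega)]
        rw [List.take_succ_cons, htB, htB', ← Multiset.coe_eq_coe, ← Multiset.coe_eq_coe,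
          Multiset.coe_eq_coe.mpr (List.perm_middle (a := c) (l₁ := u) (l₂ := w.take (ℓ' - u.length))),
          ← Multiset.cons_coe, ← Multiset.cons_coe, Multiset.cons_inj_right]
      have hcard : badCount (c :: X') B ≤ u.length + badCount X' (B.erase c) := by
        unfold badCount
        have hsub : ((Finset.Icc 1 (c :: X').length).filter fun ℓ => ¬ ((c :: X').take ℓ).Perm (B.take ℓ)) ⊆
            ((Finset.Icc 1 u.length).filter fun ℓ => ¬ ((c :: X').take ℓ).Perm (B.take ℓ)) ∪
            ((Finset.Icc (u.length+1) (c :: X').length).filter fun ℓ => ¬ ((c :: X').take ℓ).Perm (B.take ℓ)) := by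
          intro ℓ hm
          simp only [Finset.mem_filter, Finset.mem_Icc, Finset.mem_union] at hm ⊢
          rcases hm with ⟨⟨h1, h2⟩, hbad⟩
          by_cases hple : ℓ ≤ u.length
          · exact Or.inl ⟨⟨h1, hple⟩, hbad⟩
          · exact Or.inr ⟨⟨by omega, h2⟩, hbad⟩
        calc ((Finset.Icc 1 (c :: X').length).filter fun ℓ => ¬ ((c :: X').take ℓ).Perm (B.take ℓ)).card
            ≤ _ := Finset.card_le_card hsub
          _ ≤ ((Finset.Icc 1 u.length).filter fun ℓ => ¬ ((c :: X').take ℓ).Perm (B.take ℓ)).card +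
              ((Finset.Icc (u.length+1) (c :: X').length).filter fun ℓ => ¬ ((c :: X').take ℓ).Perm (B.take ℓ)).card :=
              Finset.card_union_le _ _
          _ ≤ u.length + badCount X' (B.erase c) := by
              gcongr
              · calc ((Finset.Icc 1 u.length).filter fun ℓ => ¬ ((c :: X').take ℓ).Perm (B.take ℓ)).card
                    ≤ (Finset.Icc 1 u.length).card := Finset.card_filter_le _ _
                  _ = u.length := by simp [Nat.card_Icc]
              · apply Finset.card_le_card_of_injOn (fun ℓ => ℓ - 1)
                · intro ℓ hm
                  simp only [Finset.mem_coe, Finset.mem_filter, Finset.mem_Icc] at hm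
                  have hbad' : ¬ (X'.take (ℓ-1)).Perm ((B.erase c).take (ℓ-1)) := by
                    rw [← hkey ℓ hm.1.1]; exact hm.2
                  simp only [badCount, Finset.mem_coe, Finset.mem_filter, Finset.mem_Icc]
                  have hup : ℓ ≤ X'.length + 1 := by
                    have := hm.1.2; simpa using this
                  refine ⟨⟨?_, by omega⟩, hbad'⟩
                  by_contra hle
                  have : ℓ - 1 = 0 := by omega
                  rw [this] at hbad'
                  simp at hbad'
                · intro a ha b hb hab
                  simp only [Finset.coe_filter, Set.mem_setOf_eq, Finset.mem_Icc] at ha hb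
                  have hab' : a - 1 = b - 1 := hab
                  omega
      have hpass : passCount (c :: X') B = u.length + passCount X' (B.erase c) := rfl
      have := ih (B.erase c) hlen'
      omega
    · have : badCount (c :: X') B ≤ X'.length + 1 := by
        calc badCount (c :: X') B ≤ (Finset.Icc 1 (c :: X').length).card :=
              Finset.card_filter_le _ _
        _ = X'.length + 1 := by simp [Nat.card_Icc]
      have htw : (B.takeWhile fun a => a ≠ c) = B := by
        rw [List.takeWhile_eq_self_iff]
        intro a ha
        simp only [ne_eq, decide_eq_true_eq]
        rintro rfl
        exact hc ha
      have hpass : passCount (c :: X') B = B.length + passCount X' (B.erase c) := by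
        rw [passCount, htw]
      have hlen2 : X'.length + 1 = B.length := by simpa using hlen
      omega

open Filter Topology

lemma shift_iterate' (m : ℕ) : ∀ β : ℕ → Fin d, shift^[m] β = fun n => β (n + m) := by
  induction m with
  | zero => intro β; simp
  | succ m ih =>
    intro β
    rw [Function.iterate_succ_apply, ih (shift β)]
    exact funext fun n => rfl

lemma shift_iterate (β : ℕ → Fin d) (m : ℕ) : shift^[m] β = fun n => β (n + m) :=
  shift_iterate' m β

lemma prefixList_length (β : ℕ → Fin d) (m : ℕ) : (prefixList β m).length = m :=
  List.length_ofFn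

lemma prefixList_append (β : ℕ → Fin d) (m k : ℕ) :
    prefixList β (m + k) = prefixList β m ++ List.ofFn (fun i : Fin k => β (m + i)) := by
  unfold prefixList
  rw [List.ofFn_add]
  rfl

lemma prefixList_succ (β : ℕ → Fin d) (m : ℕ) :
    prefixList β (m + 1) = prefixList β m ++ [β m] := by
  rw [prefixList_append β m 1]
  simp

lemma prefixList_take (β : ℕ → Fin d) {ℓ m : ℕ} (h : ℓ ≤ m) :
    (prefixList β m).take ℓ = prefixList β ℓ := by
  apply List.ext_getElem
  · simp [prefixList_length]; omega
  · intro n h1 h2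
    rw [List.getElem_take]
    simp [prefixList, List.getElem_ofFn]

lemma aligned_pointwise {β γ : ℕ → Fin d} {k : ℕ} (h : shift^[k] β = shift^[k] γ) :
    ∀ i, k ≤ i → β i = γ i := by
  intro i hi
  have := congrFun h (i - k)
  rw [shift_iterate, shift_iterate] at this
  simpa [Nat.sub_add_cancel hi] using this

lemma pointwise_aligned {β γ : ℕ → Fin d} {k : ℕ} (h : ∀ i, k ≤ i → β i = γ i) :
    shift^[k] β = shift^[k] γ := by
  rw [shift_iterate, shift_iterate]
  funext n
  exact h (n + k) (by omega)

lemma qMul_prefix_const (q : Fin d → Fin d → ℂ) {β γ : ℕ → Fin d} {k : ℕ}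
    (hk : ∀ i, k ≤ i → β i = γ i)
    (hperm : (prefixList γ k).Perm (prefixList β k)) {m : ℕ} (hm : k ≤ m) :
    qMul q (prefixList γ m) (prefixList β m) = qMul q (prefixList γ k) (prefixList β k) := by
  obtain ⟨j, rfl⟩ : ∃ j, m = k + j := ⟨m - k, by omega⟩
  rw [prefixList_append β, prefixList_append γ]
  have ht : (List.ofFn fun i : Fin j => γ (k + i)) = (List.ofFn fun i : Fin j => β (k + i)) := by
    congr 1
    funext i
    exact (hk (k + i) (by omega)).symm
  rw [ht]
  exact qMul_append_perm q hperm _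

lemma permAt_iff_of_aligned {β γ : ℕ → Fin d} {k : ℕ} (hk : ∀ i, k ≤ i → β i = γ i)
    {m : ℕ} (hm : k ≤ m) :
    (prefixList γ m).Perm (prefixList β m) ↔ (prefixList γ k).Perm (prefixList β k) := by
  obtain ⟨j, rfl⟩ : ∃ j, m = k + j := ⟨m - k, by omega⟩
  rw [prefixList_append β, prefixList_append γ]
  have ht : (List.ofFn fun i : Fin j => γ (k + i)) = (List.ofFn fun i : Fin j => β (k + i)) := by
    congr 1
    funext i
    exact (hk (k + i) (by omega)).symm
  rw [ht]
  exact List.perm_append_right_iff _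

/-- the alignment-with-permutation property -/
def alignedPerm (β γ : ℕ → Fin d) : Prop :=
  ∃ k, shift^[k] β = shift^[k] γ ∧ (prefixList γ k).Perm (prefixList β k)

lemma notAlignedPerm_bad {β γ : ℕ → Fin d} (hP : ¬ alignedPerm β γ) :
    ∀ N, ∃ ℓ, N ≤ ℓ ∧ 1 ≤ ℓ ∧ ¬ (prefixList γ ℓ).Perm (prefixList β ℓ) := by
  by_contra h
  push_neg at h
  obtain ⟨N, hN⟩ := h
  set L := max N 1 with hL
  have hgood : ∀ ℓ, L ≤ ℓ → (prefixList γ ℓ).Perm (prefixList β ℓ) := by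
    intro ℓ hℓ
    by_contra hbad
    exact absurd (hN ℓ (le_trans (le_max_left _ _) hℓ) (le_trans (le_max_right _ _) hℓ)) (by simpa using hbad)
  have hpt : ∀ i, L ≤ i → β i = γ i := by
    intro i hi
    have h1 := hgood i hi
    have h2 := hgood (i + 1) (by omega)
    rw [prefixList_succ, prefixList_succ, ← Multiset.coe_eq_coe] at h2
    rw [← Multiset.coe_eq_coe] at h1
    have : ((prefixList γ i : List (Fin d)) : Multiset (Fin d)) + {γ i} =
        ((prefixList β i : List (Fin d)) : Multiset (Fin d)) + {β i} := by
      simpa [← Multiset.coe_add] using h2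
    rw [h1] at this
    have := add_left_cancel this
    simpa [Multiset.singleton_inj] using this.symm
  exact hP ⟨L, pointwise_aligned hpt, hgood L le_rfl⟩

lemma tendsto_badCount {β γ : ℕ → Fin d} (hP : ¬ alignedPerm β γ) :
    Tendsto (fun m => badCount (prefixList γ m) (prefixList β m)) atTop atTop := by
  have hbc : ∀ m, badCount (prefixList γ m) (prefixList β m) =
      ((Finset.Icc 1 m).filter fun ℓ => ¬ (prefixList γ ℓ).Perm (prefixList β ℓ)).card := by
    intro m
    unfold badCount
    rw [prefixList_length]
    congr 1
    apply Finset.filter_congr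
    intro ℓ hℓ
    simp only [Finset.mem_Icc] at hℓ
    rw [prefixList_take γ hℓ.2, prefixList_take β hℓ.2]
  have hmono : ∀ m m', m ≤ m' →
      ((Finset.Icc 1 m).filter fun ℓ => ¬ (prefixList γ ℓ).Perm (prefixList β ℓ)).card ≤
      ((Finset.Icc 1 m').filter fun ℓ => ¬ (prefixList γ ℓ).Perm (prefixList β ℓ)).card := by
    intro m m' hmm
    apply Finset.card_le_card
    apply Finset.filter_subset_filter
    intro ℓ hℓ
    simp only [Finset.mem_Icc] at hℓ ⊢
    omega
  have key : ∀ b : ℕ, ∃ N, ∀ m, N ≤ m →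
      b ≤ ((Finset.Icc 1 m).filter fun ℓ => ¬ (prefixList γ ℓ).Perm (prefixList β ℓ)).card := by
    intro b
    induction b with
    | zero => exact ⟨0, fun m _ => Nat.zero_le _⟩
    | succ b ihb =>
      obtain ⟨N, hN⟩ := ihb
      obtain ⟨ℓ₀, hℓ₀N, hℓ₀1, hbad⟩ := notAlignedPerm_bad hP (N + 1)
      refine ⟨ℓ₀, fun m hm => ?_⟩
      have h1 : b + 1 ≤ ((Finset.Icc 1 ℓ₀).filter fun ℓ => ¬ (prefixList γ ℓ).Perm (prefixList β ℓ)).card := by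
        have hins : insert ℓ₀ ((Finset.Icc 1 (ℓ₀ - 1)).filter fun ℓ => ¬ (prefixList γ ℓ).Perm (prefixList β ℓ)) ⊆
            (Finset.Icc 1 ℓ₀).filter fun ℓ => ¬ (prefixList γ ℓ).Perm (prefixList β ℓ) := by
          intro x hx
          rcases Finset.mem_insert.mp hx with rfl | hx
          · simp only [Finset.mem_filter, Finset.mem_Icc]
            exact ⟨⟨hℓ₀1, le_rfl⟩, hbad⟩
          · simp only [Finset.mem_filter, Finset.mem_Icc] at hx ⊢
            exact ⟨⟨hx.1.1, by omega⟩, hx.2⟩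
        have hcard := Finset.card_le_card hins
        rw [Finset.card_insert_of_notMem (by simp [Finset.mem_Icc]; omega)] at hcard
        have := hN (ℓ₀ - 1) (by omega)
        omega
      exact le_trans h1 (hmono ℓ₀ m hm)
  rw [tendsto_atTop]
  intro b
  rw [eventually_atTop]
  obtain ⟨N, hN⟩ := key b
  exact ⟨N, fun m hm => by rw [hbc]; exact hN m hm⟩

lemma tendsto_qMul_zero (q : Fin d → Fin d → ℂ) {r : ℝ} (hr0 : 0 ≤ r) (hr1 : r < 1)
    (hq : ∀ i j : Fin d, i ≠ j → ‖q i j‖ ≤ r)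
    {β γ : ℕ → Fin d} (hP : ¬ alignedPerm β γ) :
    Tendsto (fun m => qMul q (prefixList γ m) (prefixList β m)) atTop (𝓝 0) := by
  have hpass : Tendsto (fun m => passCount (prefixList γ m) (prefixList β m)) atTop atTop := by
    rw [tendsto_atTop]
    intro b
    have := (tendsto_atTop.mp (tendsto_badCount hP)) (2 * b + 2)
    filter_upwards [this] with m hm
    have hble := badCount_le (prefixList γ m) (prefixList β m)
      (by rw [prefixList_length, prefixList_length])
    omega
  rw [tendsto_zero_iff_norm_tendsto_zero]
  have hb : ∀ m, ‖qMul q (prefixList γ m) (prefixList β m)‖ ≤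
      r ^ passCount (prefixList γ m) (prefixList β m) := by
    intro m
    exact abs_qMul_le q hr0 hq _ _
  exact squeeze_zero (fun m => norm_nonneg _) hb
    ((tendsto_pow_atTop_nhds_zero_of_lt_one hr0 hr1).comp hpass)

lemma exists_r {d : ℕ} (hd : 2 ≤ d) (q : Fin d → Fin d → ℂ)
    (hlt : ∀ i j : Fin d, i ≠ j → ‖q i j‖ < 1) :
    ∃ r : ℝ, 0 ≤ r ∧ r < 1 ∧ ∀ i j : Fin d, i ≠ j → ‖q i j‖ ≤ r := by
  have hne0 : (0:ℕ) < d := by omega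
  have hne : (Finset.univ : Finset (Fin d × Fin d)).Nonempty :=
    ⟨(⟨0, hne0⟩, ⟨0, hne0⟩), Finset.mem_univ _⟩
  set f : Fin d × Fin d → ℝ := fun p => if p.1 = p.2 then 0 else ‖q p.1 p.2‖ with hf
  refine ⟨(Finset.univ : Finset (Fin d × Fin d)).sup' hne f, ?_, ?_, ?_⟩
  · have h := Finset.le_sup' f (Finset.mem_univ ((⟨0, hne0⟩ : Fin d), (⟨0, hne0⟩ : Fin d)))
    simp [hf] at h
    exact h
  · rw [Finset.sup'_lt_iff]
    intro p _
    rw [hf]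
    dsimp only
    split
    · exact zero_lt_one
    · exact hlt _ _ (by assumption)
  · intro i j hij
    have h := Finset.le_sup' f (Finset.mem_univ (i, j))
    rw [hf] at h
    simp [hij] at h
    exact h

section eval

variable (q : Fin d → Fin d → ℂ) {β γ : ℕ → Fin d}

lemma tendsto_qMul_of_alignedPerm {k : ℕ} (hal : shift^[k] β = shift^[k] γ)
    (hperm : (prefixList γ k).Perm (prefixList β k)) :
    Tendsto (fun m => qMul q (prefixList γ m) (prefixList β m)) atTop
      (𝓝 (qMul q (prefixList γ k) (prefixList β k))) := by
  apply Filter.Tendsto.congr' _ tendsto_const_nhds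
  rw [Filter.EventuallyEq, eventually_atTop]
  exact ⟨k, fun m hm => (qMul_prefix_const q (aligned_pointwise hal) hperm hm).symm⟩

lemma qInf_of_alignedPerm {k : ℕ} (hal : shift^[k] β = shift^[k] γ)
    (hperm : (prefixList γ k).Perm (prefixList β k)) :
    qInf q γ β = qMul q (prefixList γ k) (prefixList β k) := by
  unfold qInf
  exact (tendsto_qMul_of_alignedPerm q hal hperm).limUnder_eq

lemma qInf_of_not_alignedPerm {r : ℝ} (hr0 : 0 ≤ r) (hr1 : r < 1)
    (hq : ∀ i j : Fin d, i ≠ j → ‖q i j‖ ≤ r)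
    (hP : ¬ alignedPerm β γ) : qInf q γ β = 0 := by
  unfold qInf
  exact (tendsto_qMul_zero q hr0 hr1 hq hP).limUnder_eq

lemma tendsto_qInf (hd : 2 ≤ d) (hlt : ∀ i j : Fin d, i ≠ j → ‖q i j‖ < 1)
    (β γ : ℕ → Fin d) :
    Tendsto (fun m => fockEntry q (prefixList β m) (prefixList γ m)) atTop (𝓝 (qInf q γ β)) := by
  obtain ⟨r, hr0, hr1, hq⟩ := exists_r hd q hlt
  by_cases hP : alignedPerm β γ
  · obtain ⟨k, hal, hperm⟩ := hP
    rw [qInf_of_alignedPerm q hal hperm]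
    apply Filter.Tendsto.congr' _ tendsto_const_nhds
    rw [Filter.EventuallyEq, eventually_atTop]
    refine ⟨k, fun m hm => ?_⟩
    unfold fockEntry
    rw [if_pos ((permAt_iff_of_aligned (aligned_pointwise hal) hm).mpr hperm)]
    exact (qMul_prefix_const q (aligned_pointwise hal) hperm hm).symm
  · rw [qInf_of_not_alignedPerm q hr0 hr1 hq hP]
    have h0 := tendsto_qMul_zero q hr0 hr1 hq hP
    rw [tendsto_zero_iff_norm_tendsto_zero] at h0 ⊢
    apply squeeze_zero (fun m => norm_nonneg _) _ h0
    intro m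
    unfold fockEntry
    split
    · exact le_rfl
    · simp

end eval

section conjsym

variable (q : Fin d → Fin d → ℂ)

lemma fockEntry_self (A : List (Fin d)) : fockEntry q A A = 1 := by
  unfold fockEntry
  rw [if_pos (List.Perm.refl A), qMul_self]

lemma fockEntry_conj
    (hF : ∀ (k : ℕ) (x : List (Fin d) →₀ ℂ), (∀ γ ∈ x.support, γ.length = k) →
      0 ≤ (fockForm q x x).re ∧ (fockForm q x x).im = 0)
    {A B : List (Fin d)} (hAB : A.length = B.length) :
    fockEntry q A B = (starRingEnd ℂ) (fockEntry q B A) := by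
  by_cases hEq : A = B
  · subst hEq
    rw [fockEntry_self]
    simp
  · set u := fockEntry q A B with hu
    set v := fockEntry q B A with hv
    have hform : ∀ c : ℂ, c ≠ 0 →
        fockForm q (Finsupp.single A 1 + Finsupp.single B c)
          (Finsupp.single A 1 + Finsupp.single B c) =
        1 + (starRingEnd ℂ) c * c + c * u + (starRingEnd ℂ) c * v := by
      intro c hc
      set x := Finsupp.single A (1:ℂ) + Finsupp.single B c with hx
      have hsupp : x.support = {A, B} := by
        rw [hx, Finsupp.support_add_eq]
        · rw [Finsupp.support_single_ne_zero A one_ne_zero,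
            Finsupp.support_single_ne_zero B hc]
          rfl
        · rw [Finsupp.support_single_ne_zero A one_ne_zero,
            Finsupp.support_single_ne_zero B hc]
          exact Finset.disjoint_singleton.mpr hEq
      have hxA : x A = 1 := by
        rw [hx]
        simp [Finsupp.single_apply, hEq, (Ne.symm hEq : ¬ B = A)]
      have hxB : x B = c := by
        rw [hx]
        simp [Finsupp.single_apply, hEq, (Ne.symm hEq : ¬ B = A)]
      unfold fockForm
      rw [hsupp, Finset.sum_pair hEq, Finset.sum_pair hEq, Finset.sum_pair hEq,
        hxA, hxB, fockEntry_self, fockEntry_self, ← hu, ← hv]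
      simp only [map_one]
      ring
    have h1 := (hF A.length (Finsupp.single A 1 + Finsupp.single B 1) ?len1).2
    case len1 =>
      intro l hl
      have := Finsupp.support_add hl
      rcases Finset.mem_union.mp this with h | h
      · have := Finsupp.support_single_subset h
        simp at this
        subst this; rfl
      · have := Finsupp.support_single_subset h
        simp at this
        subst this; exact hAB.symm
    have h2 := (hF A.length (Finsupp.single A 1 + Finsupp.single B Complex.I) ?len2).2
    case len2 =>
      intro l hl
      have := Finsupp.support_add hl
      rcases Finset.mem_union.mp this with h | h
      · have := Finsupp.support_single_subset h
        simp at this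
        subst this; rfl
      · have := Finsupp.support_single_subset h
        simp at this
        subst this; exact hAB.symm
    rw [hform 1 one_ne_zero] at h1
    rw [hform Complex.I Complex.I_ne_zero] at h2
    simp only [map_one, one_mul, mul_one, Complex.add_im, Complex.one_im, Complex.mul_im,
      Complex.conj_re, Complex.conj_im, Complex.I_re, Complex.I_im, Complex.one_re] at h1 h2
    apply Complex.ext
    · simp only [Complex.conj_re]
      nlinarith [h1, h2]
    · simp only [Complex.conj_im]
      nlinarith [h1, h2]

end conjsym

lemma prefixList_eq_iff {a b : ℕ → Fin d} {m : ℕ} :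
    prefixList a m = prefixList b m ↔ ∀ i, i < m → a i = b i := by
  unfold prefixList
  rw [List.ofFn_inj]
  constructor
  · intro h i hi
    exact congrFun h ⟨i, hi⟩
  · intro h
    funext i
    exact h i i.2

lemma qInf_conj (hd : 2 ≤ d) (q : Fin d → Fin d → ℂ)
    (hlt : ∀ i j : Fin d, i ≠ j → ‖q i j‖ < 1)
    (hF : ∀ (k : ℕ) (x : List (Fin d) →₀ ℂ), (∀ γ ∈ x.support, γ.length = k) →
      0 ≤ (fockForm q x x).re ∧ (fockForm q x x).im = 0)
    (β γ : ℕ → Fin d) :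
    qInf q γ β = (starRingEnd ℂ) (qInf q β γ) := by
  obtain ⟨r, hr0, hr1, hq⟩ := exists_r hd q hlt
  by_cases hP : alignedPerm β γ
  · obtain ⟨k, hal, hperm⟩ := hP
    rw [qInf_of_alignedPerm q hal hperm, qInf_of_alignedPerm q hal.symm hperm.symm]
    have h := fockEntry_conj q hF (A := prefixList β k) (B := prefixList γ k)
      (by rw [prefixList_length, prefixList_length])
    unfold fockEntry at h
    rw [if_pos hperm, if_pos hperm.symm] at h
    exact h
  · have hP' : ¬ alignedPerm γ β := fun ⟨k, hal, hperm⟩ => hP ⟨k, hal.symm, hperm.symm⟩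
    rw [qInf_of_not_alignedPerm q hr0 hr1 hq hP, qInf_of_not_alignedPerm q hr0 hr1 hq hP']
    simp


theorem statement6 {d : ℕ} (hd : 2 ≤ d) (q : Fin d → Fin d → ℂ)
    (hsym : ∀ i j : Fin d, i ≠ j → q i j = (starRingEnd ℂ) (q j i))
    (hlt : ∀ i j : Fin d, i ≠ j → ‖q i j‖ < 1)
    (α : ℕ → Fin d)
    (hFpos : ∀ (k : ℕ) (x : List (Fin d) →₀ ℂ), (∀ γ ∈ x.support, γ.length = k) →
      0 ≤ (fockForm q x x).re ∧ (fockForm q x x).im = 0) :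
    (∀ x y : {β : ℕ → Fin d // equivTail β α} →₀ ℂ,
      tailForm q α x y = (starRingEnd ℂ) (tailForm q α y x)) ∧
    (∀ x : {β : ℕ → Fin d // equivTail β α} →₀ ℂ,
      0 ≤ (tailForm q α x x).re ∧ (tailForm q α x x).im = 0) ∧
    (∀ β γ : ℕ → Fin d, equivTail β α → equivTail γ α →
      ∀ m : ℕ, shift^[m] β = shift^[m] γ →
        qInf q γ β = fockEntry q (prefixList β m) (prefixList γ m)) ∧
    (∀ β γ : ℕ → Fin d, equivTail β α → equivTail γ α →
      (¬∃ m : ℕ, shift^[m] β = shift^[m] γ) → qInf q γ β = 0) := by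
  obtain ⟨r, hr0, hr1, hq⟩ := exists_r hd q hlt
  refine ⟨?_, ?_, ?_, ?_⟩
  · -- Hermitian symmetry
    intro x y
    calc tailForm q α x y
        = ∑ γ ∈ y.support, ∑ β ∈ x.support,
            (starRingEnd ℂ) (x β) * y γ * qInf q γ.1 β.1 := Finset.sum_comm
      _ = (starRingEnd ℂ) (tailForm q α y x) := by
          unfold tailForm
          rw [map_sum]
          apply Finset.sum_congr rfl
          intro γ hγ
          rw [map_sum]
          apply Finset.sum_congr rfl
          intro β hβ
          rw [map_mul, map_mul, Complex.conj_conj,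
            ← qInf_conj hd q hlt hFpos β.1 γ.1]
          ring
  · -- positivity
    intro x
    classical
    obtain ⟨M₀, hM₀⟩ : ∃ M₀ : ℕ, ∀ a ∈ x.support, ∀ b ∈ x.support, a ≠ b →
        ∃ n, n < M₀ ∧ a.1 n ≠ b.1 n := by
      refine ⟨(x.support ×ˢ x.support).sup
        (fun p => if h : ∃ n, p.1.1 n ≠ p.2.1 n then Nat.find h + 1 else 0), ?_⟩
      intro a ha b hb hab
      have hex : ∃ n, a.1 n ≠ b.1 n := by
        by_contra hno
        push_neg at hno
        exact hab (Subtype.ext (funext hno))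
      refine ⟨Nat.find hex, ?_, Nat.find_spec hex⟩
      have hmem : (a, b) ∈ x.support ×ˢ x.support := Finset.mem_product.mpr ⟨ha, hb⟩
      have hle := Finset.le_sup
        (f := fun p : {β // equivTail β α} × {β // equivTail β α} =>
          if h : ∃ n, p.1.1 n ≠ p.2.1 n then Nat.find h + 1 else 0) hmem
      have hle' : (if h : ∃ n, a.1 n ≠ b.1 n then Nat.find h + 1 else 0) ≤
          (x.support ×ˢ x.support).sup
            (fun p : {β // equivTail β α} × {β // equivTail β α} =>
              if h : ∃ n, p.1.1 n ≠ p.2.1 n then Nat.find h + 1 else 0) := hle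
      rw [dif_pos hex] at hle'
      omega
    set S : ℕ → ℂ := fun m => ∑ β ∈ x.support, ∑ γ ∈ x.support,
        (starRingEnd ℂ) (x β) * x γ * fockEntry q (prefixList β.1 m) (prefixList γ.1 m) with hS
    have htends : Tendsto S atTop (𝓝 (tailForm q α x x)) := by
      rw [hS]
      unfold tailForm
      apply tendsto_finset_sum
      intro β _
      apply tendsto_finset_sum
      intro γ _
      exact (tendsto_qInf q hd hlt β.1 γ.1).const_mul _
    have hev : ∀ m, M₀ ≤ m → 0 ≤ (S m).re ∧ (S m).im = 0 := by
      intro m hm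
      have hinj : ∀ a ∈ x.support, ∀ b ∈ x.support,
          prefixList a.1 m = prefixList b.1 m → a = b := by
        intro a ha b hb hpre
        by_contra hab
        obtain ⟨n, hn, hne⟩ := hM₀ a ha b hb hab
        exact hne (prefixList_eq_iff.mp hpre n (lt_of_lt_of_le hn hm))
      have hinj' : Set.InjOn (fun β : {β // equivTail β α} => prefixList β.1 m)
          ↑x.support := fun a ha b hb h => hinj a ha b hb h
      set y := Finsupp.mapDomain (fun β : {β // equivTail β α} => prefixList β.1 m) x with hy
      have hysupp : y.support = x.support.image
          (fun β : {β // equivTail β α} => prefixList β.1 m) :=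
        Finsupp.mapDomain_support_of_injOn x hinj'
      have hyap : ∀ a ∈ x.support, y (prefixList a.1 m) = x a := by
        intro a ha
        rw [hy]
        exact Finsupp.mapDomain_apply' ↑x.support x subset_rfl hinj' ha
      have hlen : ∀ γ' ∈ y.support, γ'.length = m := by
        intro l hl
        rw [hysupp] at hl
        obtain ⟨a, _, rfl⟩ := Finset.mem_image.mp hl
        exact prefixList_length a.1 m
      have heq : fockForm q y y = S m := by
        unfold fockForm
        rw [hS, hysupp, Finset.sum_image hinj]
        apply Finset.sum_congr rfl
        intro a ha
        rw [Finset.sum_image hinj]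
        apply Finset.sum_congr rfl
        intro b hb
        rw [hyap a ha, hyap b hb]
      have := hFpos m y hlen
      rw [heq] at this
      exact this
    constructor
    · have hre : Tendsto (fun m => (S m).re) atTop (𝓝 (tailForm q α x x).re) :=
        (Complex.continuous_re.tendsto _).comp htends
      apply ge_of_tendsto hre
      rw [eventually_atTop]
      exact ⟨M₀, fun m hm => (hev m hm).1⟩
    · have him : Tendsto (fun m => (S m).im) atTop (𝓝 (tailForm q α x x).im) :=
        (Complex.continuous_im.tendsto _).comp htends
      have him0 : Tendsto (fun m => (S m).im) atTop (𝓝 (0:ℝ)) := by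
        apply Filter.Tendsto.congr' _ tendsto_const_nhds
        rw [Filter.EventuallyEq, eventually_atTop]
        exact ⟨M₀, fun m hm => ((hev m hm).2).symm⟩
      exact tendsto_nhds_unique him him0
  · -- aligned case
    intro β γ _ _ m hal
    by_cases hperm : (prefixList γ m).Perm (prefixList β m)
    · rw [qInf_of_alignedPerm q hal hperm]
      unfold fockEntry
      rw [if_pos hperm]
    · have hP : ¬ alignedPerm β γ := by
        rintro ⟨k, hal', hperm'⟩
        rcases le_total k m with h | h
        · exact hperm ((permAt_iff_of_aligned (aligned_pointwise hal') h).mpr hperm')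
        · exact hperm ((permAt_iff_of_aligned (aligned_pointwise hal) h).mp hperm')
      rw [qInf_of_not_alignedPerm q hr0 hr1 hq hP]
      unfold fockEntry
      rw [if_neg hperm]
  · -- no alignment
    intro β γ _ _ hnal
    have hP : ¬ alignedPerm β γ := fun ⟨k, hal, _⟩ => hnal ⟨k, hal⟩
    exact qInf_of_not_alignedPerm q hr0 hr1 hq hP

end QCstar
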